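/- Let X be a real linear n-normed space, S a subspace of X, and x ∈ X such that x, b₂,…,bₙ are linearly independent. Then inf{‖x − s, b₂,…,bₙ‖ : s ∈ S} = sup{T(x, b₂,…,bₙ) : T ∈ S_F^θ}, where S_F^θ is the set of bounded b-linear functionals T on X × ⟨b₂⟩ × ⋯ × ⟨bₙ⟩ with ‖T‖ ≤ 1 and T(s, b₂,…,bₙ) = 0 for all s ∈ S. -/

import Mathlib

noncomputable section
open Filter Topology

/-- A linear `n+1`-normed space over `𝕜` (real or complex): an `(n+1)`-norm on `X`. -/
structure NNormSp (n : ℕ) (𝕜 : Type*) (X : Type*) [RCLike 𝕜] [AddCommGroup X] [Module 𝕜 X] where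
  N : (Fin (n + 1) → X) → ℝ
  eq_zero_iff : ∀ v : Fin (n + 1) → X, N v = 0 ↔ ¬ LinearIndependent 𝕜 v
  perm_invariant : ∀ (v : Fin (n + 1) → X) (σ : Equiv.Perm (Fin (n + 1))), N (v ∘ σ) = N v
  smul_first : ∀ (α : 𝕜) (x : X) (a : Fin n → X), N (Fin.cons (α • x) a) = ‖α‖ * N (Fin.cons x a)
  add_first : ∀ (x y : X) (a : Fin n → X),
    N (Fin.cons (x + y) a) ≤ N (Fin.cons x a) + N (Fin.cons y a)

namespace NNormSp

variable {n : ℕ} {𝕜 X : Type*} [RCLike 𝕜] [AddCommGroup X] [Module 𝕜 X]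

/-- Convergence of a sequence in a linear n-normed space. -/
def TendstoSeq (S : NNormSp n 𝕜 X) (x : ℕ → X) (l : X) : Prop :=
  ∀ a : Fin n → X, Tendsto (fun k => S.N (Fin.cons (x k - l) a)) atTop (𝓝 0)

/-- Cauchy sequence in a linear n-normed space. -/
def CauchySeqN (S : NNormSp n 𝕜 X) (x : ℕ → X) : Prop :=
  ∀ a : Fin n → X, Tendsto (fun p : ℕ × ℕ => S.N (Fin.cons (x p.1 - x p.2) a)) atTop (𝓝 0)

/-- An n-Banach space: every Cauchy sequence converges. -/
def Complete (S : NNormSp n 𝕜 X) : Prop :=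
  ∀ x : ℕ → X, S.CauchySeqN x → ∃ l, S.TendstoSeq x l

/-- Boundedness of a b-linear functional with respect to the fixed tuple `b`. -/
def IsBounded (S : NNormSp n 𝕜 X) (b : Fin n → X) (T : X → 𝕜) : Prop :=
  ∃ M > (0 : ℝ), ∀ x : X, ‖T x‖ ≤ M * S.N (Fin.cons x b)

/-- The norm of a bounded b-linear functional. -/
def opNorm (S : NNormSp n 𝕜 X) (b : Fin n → X) (T : X → 𝕜) : ℝ :=
  sInf {M : ℝ | 0 < M ∧ ∀ x : X, ‖T x‖ ≤ M * S.N (Fin.cons x b)}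

/-- Continuity of a functional at a point, in the open-ball sense. -/
def ContAt (S : NNormSp n 𝕜 X) (T : X → 𝕜) (x₀ : X) : Prop :=
  ∀ ε > (0 : ℝ), ∃ (e : Fin n → X) (δ : ℝ), 0 < δ ∧
    ∀ x : X, S.N (Fin.cons (x - x₀) e) < δ → ‖T x - T x₀‖ < ε

end NNormSp

/-- A b-linear functional: additive and homogeneous in its first argument. -/
def IsBLinear {𝕜 X : Type*} [RCLike 𝕜] [AddCommGroup X] [Module 𝕜 X] (T : X → 𝕜) : Prop :=
  (∀ x y : X, T (x + y) = T x + T y) ∧ ∀ (c : 𝕜) (x : X), T (c • x) = c * T x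

section AuxLemmas

variable {n : ℕ} {X : Type*} [AddCommGroup X] [Module ℝ X]

lemma NNormSp.cons_zero' (S : NNormSp n ℝ X) (a : Fin n → X) : S.N (Fin.cons 0 a) = 0 := by
  simpa using S.smul_first 0 0 a

lemma NNormSp.cons_neg' (S : NNormSp n ℝ X) (y : X) (a : Fin n → X) :
    S.N (Fin.cons (-y) a) = S.N (Fin.cons y a) := by
  simpa using S.smul_first (-1) y a

lemma NNormSp.cons_nonneg' (S : NNormSp n ℝ X) (y : X) (a : Fin n → X) :
    0 ≤ S.N (Fin.cons y a) := by
  have h := S.add_first y (-y) a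
  rw [add_neg_cancel, S.cons_zero', S.cons_neg'] at h
  linarith

lemma NNormSp.cons_smul' (S : NNormSp n ℝ X) (c : ℝ) (y : X) (a : Fin n → X) :
    S.N (Fin.cons (c • y) a) = |c| * S.N (Fin.cons y a) := by
  simpa [Real.norm_eq_abs] using S.smul_first c y a

/-- From `IsBounded`, the bound holds with the `opNorm` itself. -/
lemma NNormSp.norm_le_opNorm_mul (S : NNormSp n ℝ X) (b : Fin n → X) (T : X → ℝ)
    (hT : S.IsBounded b T) (y : X) :
    ‖T y‖ ≤ S.opNorm b T * S.N (Fin.cons y b) := by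
  obtain ⟨M₀, hM₀, hb₀⟩ := hT
  have hne : {M : ℝ | 0 < M ∧ ∀ x : X, ‖T x‖ ≤ M * S.N (Fin.cons x b)}.Nonempty :=
    ⟨M₀, hM₀, hb₀⟩
  by_cases hN : S.N (Fin.cons y b) = 0
  · rw [hN, mul_zero]
    have := hb₀ y; rw [hN, mul_zero] at this; exact this
  · have hNpos : 0 < S.N (Fin.cons y b) := lt_of_le_of_ne (S.cons_nonneg' y b) (Ne.symm hN)
    refine le_of_forall_pos_le_add fun ε hε => ?_
    have hlt : sInf {M : ℝ | 0 < M ∧ ∀ x : X, ‖T x‖ ≤ M * S.N (Fin.cons x b)} <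
        S.opNorm b T + ε / S.N (Fin.cons y b) := by
      have : 0 < ε / S.N (Fin.cons y b) := div_pos hε hNpos
      unfold NNormSp.opNorm; linarith
    obtain ⟨M, hM, hMlt⟩ := exists_lt_of_csInf_lt hne hlt
    calc ‖T y‖ ≤ M * S.N (Fin.cons y b) := hM.2 y
      _ ≤ (S.opNorm b T + ε / S.N (Fin.cons y b)) * S.N (Fin.cons y b) :=
        mul_le_mul_of_nonneg_right hMlt.le hNpos.le
      _ = S.opNorm b T * S.N (Fin.cons y b) + ε := by
        rw [add_mul, div_mul_cancel₀ _ hN]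

end AuxLemmas

theorem dist_eq_sup_annihilator
    {n : ℕ} {X : Type*} [AddCommGroup X] [Module ℝ X]
    (S : NNormSp n ℝ X) (b : Fin n → X) (Sub : Submodule ℝ X)
    (x : X) (hind : LinearIndependent ℝ (Fin.cons x b)) :
    sInf {r : ℝ | ∃ s ∈ Sub, r = S.N (Fin.cons (x - s) b)} =
      sSup {r : ℝ | ∃ T : X → ℝ, IsBLinear T ∧ S.IsBounded b T ∧
        S.opNorm b T ≤ 1 ∧ (∀ s ∈ Sub, T s = 0) ∧ r = T x} := by
  classical
  set B : Set ℝ := {r : ℝ | ∃ T : X → ℝ, IsBLinear T ∧ S.IsBounded b T ∧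
      S.opNorm b T ≤ 1 ∧ (∀ s ∈ Sub, T s = 0) ∧ r = T x} with hB
  set A : X → Set ℝ := fun y => {r : ℝ | ∃ s ∈ Sub, r = S.N (Fin.cons (y - s) b)} with hA
  set p : X → ℝ := fun y => sInf (A y) with hp
  have hne : ∀ y, (A y).Nonempty := fun y => ⟨_, 0, Sub.zero_mem, rfl⟩
  have hbddA : ∀ y, BddBelow (A y) := by
    intro y; refine ⟨0, ?_⟩; rintro r ⟨s, hs, rfl⟩; exact S.cons_nonneg' _ b
  have hp_nonneg : ∀ y, 0 ≤ p y := by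
    intro y; refine le_csInf (hne y) ?_; rintro r ⟨s, hs, rfl⟩; exact S.cons_nonneg' _ b
  have hp_le : ∀ y, ∀ s ∈ Sub, p y ≤ S.N (Fin.cons (y - s) b) :=
    fun y s hs => csInf_le (hbddA y) ⟨s, hs, rfl⟩
  -- subadditivity of p
  have hp_add : ∀ y z, p (y + z) ≤ p y + p z := by
    intro y z
    refine le_of_forall_pos_le_add fun ε hε => ?_
    obtain ⟨r1, hr1, hr1lt⟩ := exists_lt_of_csInf_lt (hne y)
      (show sInf (A y) < p y + ε / 2 by have := half_pos hε; rw [hp]; linarith)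
    obtain ⟨r2, hr2, hr2lt⟩ := exists_lt_of_csInf_lt (hne z)
      (show sInf (A z) < p z + ε / 2 by have := half_pos hε; rw [hp]; linarith)
    obtain ⟨s1, hs1, rfl⟩ := hr1
    obtain ⟨s2, hs2, rfl⟩ := hr2
    have hmem : p (y + z) ≤ S.N (Fin.cons (y + z - (s1 + s2)) b) :=
      hp_le _ _ (Sub.add_mem hs1 hs2)
    have htri : S.N (Fin.cons (y + z - (s1 + s2)) b) ≤
        S.N (Fin.cons (y - s1) b) + S.N (Fin.cons (z - s2) b) := by
      have hsplit : y + z - (s1 + s2) = (y - s1) + (z - s2) := by abel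
      rw [hsplit]; exact S.add_first _ _ b
    linarith
  -- positive homogeneity of p
  have hp_smul : ∀ c : ℝ, 0 < c → ∀ y, p (c • y) = c * p y := by
    intro c hc y
    have hc0 : c ≠ 0 := ne_of_gt hc
    apply le_antisymm
    · rw [← div_le_iff₀' hc]
      refine le_csInf (hne y) ?_
      rintro r ⟨s, hs, rfl⟩
      rw [div_le_iff₀' hc]
      have hval : S.N (Fin.cons (c • y - c • s) b) = c * S.N (Fin.cons (y - s) b) := by
        rw [← smul_sub, S.cons_smul', abs_of_pos hc]
      have := hp_le (c • y) (c • s) (Sub.smul_mem c hs)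
      rw [hval] at this
      exact this
    · refine le_csInf (hne _) ?_
      rintro r ⟨s, hs, rfl⟩
      have hval : S.N (Fin.cons (c • y - s) b) = c * S.N (Fin.cons (y - c⁻¹ • s) b) := by
        rw [show c • y - s = c • (y - c⁻¹ • s) by rw [smul_sub, smul_inv_smul₀ hc0],
          S.cons_smul', abs_of_pos hc]
      rw [hval]
      exact mul_le_mul_of_nonneg_left (hp_le y (c⁻¹ • s) (Sub.smul_mem _ hs)) hc.le
  -- every element of B is at most p x
  have hub : ∀ r ∈ B, r ≤ p x := by
    rintro r ⟨T, hTlin, hTbdd, hTnorm, hTzero, rfl⟩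
    refine le_csInf (hne x) ?_
    rintro r ⟨s, hs, rfl⟩
    have h1 : T x = T (x - s) := by
      have h := hTlin.1 (x - s) s
      rw [sub_add_cancel] at h
      rw [h, hTzero s hs, add_zero]
    calc T x = T (x - s) := h1
      _ ≤ ‖T (x - s)‖ := by rw [Real.norm_eq_abs]; exact le_abs_self _
      _ ≤ S.opNorm b T * S.N (Fin.cons (x - s) b) := S.norm_le_opNorm_mul b T hTbdd (x - s)
      _ ≤ 1 * S.N (Fin.cons (x - s) b) :=
        mul_le_mul_of_nonneg_right hTnorm (S.cons_nonneg' _ b)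
      _ = S.N (Fin.cons (x - s) b) := one_mul _
  -- p x belongs to B
  have hmemB : p x ∈ B := by
    by_cases hx : x ∈ Sub
    · -- trivial case: distance is zero, take the zero functional
      have hpx : p x = 0 := by
        have h0 := hp_le x x hx
        rw [sub_self, S.cons_zero'] at h0
        exact le_antisymm h0 (hp_nonneg x)
      refine ⟨fun _ => 0, ⟨fun _ _ => by ring, fun _ _ => by ring⟩,
        ⟨1, one_pos, fun y => by simpa using S.cons_nonneg' y b⟩, ?_, fun _ _ => rfl, hpx⟩
      exact csInf_le ⟨0, fun M hM => hM.1.le⟩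
        ⟨one_pos, fun y => by simpa using S.cons_nonneg' y b⟩
    · -- Hahn–Banach case
      set f0 : X →ₗ.[ℝ] ℝ := ⟨Sub, 0⟩ with hf0
      have hx' : x ∉ f0.domain := hx
      set g := f0.supSpanSingleton x (p x) hx' with hg
      have gval : ∀ (s : X) (hs : s ∈ Sub) (c : ℝ) (hmem : s + c • x ∈ g.domain),
          g ⟨s + c • x, hmem⟩ = c * p x := by
        intro s hs c hmem
        have h := f0.supSpanSingleton_apply_mk x (p x) hx' s hs c
        have h0 : (f0 ⟨s, hs⟩ : ℝ) = 0 := rfl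
        rw [h0, zero_add, smul_eq_mul] at h
        exact h
      have hfle : ∀ z : g.domain, g z ≤ p z := by
        rintro ⟨z, hz⟩
        have hz' : z ∈ (Sub ⊔ (Submodule.span ℝ {x}) : Submodule ℝ X) := hz
        obtain ⟨s, hs, w, hw, rfl⟩ := Submodule.mem_sup.1 hz'
        obtain ⟨c, rfl⟩ := Submodule.mem_span_singleton.1 hw
        rw [gval s hs c hz]
        rcases lt_trichotomy c 0 with hc | hc | hc
        · have : c * p x ≤ 0 := mul_nonpos_iff.2 (Or.inr ⟨hc.le, hp_nonneg x⟩)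
          exact this.trans (hp_nonneg _)
        · simpa [hc] using hp_nonneg (s + c • x)
        · refine le_csInf (hne _) ?_
          rintro r ⟨s', hs', rfl⟩
          have hc0 : c ≠ 0 := ne_of_gt hc
          have hval : S.N (Fin.cons (s + c • x - s') b) =
              c * S.N (Fin.cons (x - c⁻¹ • (s' - s)) b) := by
            rw [show s + c • x - s' = c • (x - c⁻¹ • (s' - s)) by
              rw [smul_sub, smul_inv_smul₀ hc0]; abel, S.cons_smul', abs_of_pos hc]
          rw [hval]
          exact mul_le_mul_of_nonneg_left
            (hp_le x (c⁻¹ • (s' - s)) (Sub.smul_mem _ (Sub.sub_mem hs' hs))) hc.le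
      obtain ⟨T, hTg, hTle⟩ := exists_extension_of_le_sublinear g p hp_smul hp_add hfle
      have habs : ∀ y, |T y| ≤ S.N (Fin.cons y b) := by
        intro y
        have h1 : T y ≤ S.N (Fin.cons y b) := by
          have := (hTle y).trans (hp_le y 0 Sub.zero_mem)
          rwa [sub_zero] at this
        have h2 : -T y ≤ S.N (Fin.cons y b) := by
          have := (hTle (-y)).trans (hp_le (-y) 0 Sub.zero_mem)
          rw [sub_zero, S.cons_neg'] at this
          rwa [← T.map_neg]
        exact abs_le.2 ⟨by linarith, h1⟩
      have hxmem : x ∈ g.domain :=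
        Submodule.mem_sup_right (Submodule.mem_span_singleton_self x)
      have hTx : T x = p x := by
        have hmem' : (0 : X) + (1 : ℝ) • x ∈ g.domain := by
          simpa using hxmem
        have h := hTg ⟨(0 : X) + (1 : ℝ) • x, hmem'⟩
        rw [gval 0 Sub.zero_mem 1 hmem'] at h
        simpa using h
      have hTzero : ∀ s ∈ Sub, T s = 0 := by
        intro s hs
        have hmem' : s + (0 : ℝ) • x ∈ g.domain := by
          rw [zero_smul, add_zero]; exact Submodule.mem_sup_left hs
        have h := hTg ⟨s + (0 : ℝ) • x, hmem'⟩
        rw [gval s hs 0 hmem'] at h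
        simpa using h
      refine ⟨T, ⟨T.map_add, fun c y => by rw [T.map_smul]; rfl⟩,
        ⟨1, one_pos, fun y => by simpa [Real.norm_eq_abs] using habs y⟩, ?_,
        hTzero, hTx.symm⟩
      exact csInf_le ⟨0, fun M hM => hM.1.le⟩
        ⟨one_pos, fun y => by simpa [Real.norm_eq_abs] using habs y⟩
  show p x = sSup B
  exact le_antisymm (le_csSup ⟨p x, hub⟩ hmemB) (csSup_le ⟨p x, hmemB⟩ hub)
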